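/- (Lemma 3.2, effective Hamiltonian.) Assume ν_1, ν_2 ≥ k > 0, (H2) and (H3) for I = 2. Suppose σ_n → 0, (n_1^{σ_n}, n_2^{σ_n}) is a solution of (FP'_{σ_n}) for each n, and R : [0,1] → ℝ is continuous and such that R_i^{σ_n} := −σ_n ln n_i^{σ_n} converges uniformly on [0,1] to R for i = 1,2. Define, for p ∈ ℝ and x ∈ [0,1], β_i(p,x) := p² − ψ_i'(x) p − ν_i (i = 1,2) and H(p,x) := (1/2)[β_1 + β_2 + √((β_1+β_2)² − 4(β_1 β_2 − ν_1 ν_2))]. Then R is a viscosity solution of H(R', x) = 0 in (0,1); explicitly: for every C¹ function Φ : (0,1) → ℝ and every local maximum point x₀ ∈ (0,1) of R − Φ one has H(Φ'(x₀), x₀) ≤ 0, and for every local minimum point x₀ ∈ (0,1) of R − Φ one has H(Φ'(x₀), x₀) ≥ 0. -/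

import Mathlib

open Real Set MeasureTheory Filter

/-- A solution of the Fokker–Planck system (FP'_σ) with large transition
coefficients `ν₁/σ`, `ν₂/σ`: `n₁, n₂` are C², strictly positive on `[0,1]`,
satisfy the system in `(0,1)` and the zero-flux boundary conditions. -/
def IsFPSolution2 (ψ₁ ψ₂ : ℝ → ℝ) (ν₁ ν₂ : ℝ) (σ : ℝ) (n₁ n₂ : ℝ → ℝ) : Prop :=
  ContDiff ℝ 2 n₁ ∧ ContDiff ℝ 2 n₂ ∧
  (∀ x ∈ Set.Icc (0:ℝ) 1, 0 < n₁ x ∧ 0 < n₂ x) ∧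
  (∀ x ∈ Set.Ioo (0:ℝ) 1,
    -σ * deriv (deriv n₁) x - deriv (fun y => deriv ψ₁ y * n₁ y) x
      + (ν₁ / σ) * n₁ x = (ν₂ / σ) * n₂ x) ∧
  (∀ x ∈ Set.Ioo (0:ℝ) 1,
    -σ * deriv (deriv n₂) x - deriv (fun y => deriv ψ₂ y * n₂ y) x
      + (ν₂ / σ) * n₂ x = (ν₁ / σ) * n₁ x) ∧
  (∀ x ∈ ({0, 1} : Set ℝ),
    σ * deriv n₁ x + deriv ψ₁ x * n₁ x = 0 ∧
    σ * deriv n₂ x + deriv ψ₂ x * n₂ x = 0)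

lemma secondDerivTest_max {f : ℝ → ℝ} {a : ℝ}
    (hd : ∀ᶠ y in nhds a, DifferentiableAt ℝ f y)
    (hd2 : DifferentiableAt ℝ (deriv f) a)
    (hmax : IsLocalMax f a) : deriv (deriv f) a ≤ 0 := by
  by_contra hpos
  push_neg at hpos
  have h0 : deriv f a = 0 := hmax.deriv_eq_zero
  have hslope : Tendsto (slope (deriv f) a) (nhdsWithin a {a}ᶜ)
      (nhds (deriv (deriv f) a)) :=
    hasDerivAt_iff_tendsto_slope.mp hd2.hasDerivAt
  have hslope' : Tendsto (slope (deriv f) a) (nhdsWithin a (Ioi a))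
      (nhds (deriv (deriv f) a)) :=
    hslope.mono_left (nhdsWithin_mono a (fun y hy => ne_of_gt hy))
  have hev : ∀ᶠ y in nhdsWithin a (Ioi a),
      0 < slope (deriv f) a y := hslope'.eventually (eventually_gt_nhds hpos)
  have hev2 : ∀ᶠ y in nhdsWithin a (Ioi a),
      0 < deriv f y ∧ DifferentiableAt ℝ f y ∧ f y ≤ f a := by
    filter_upwards [hev, eventually_nhdsWithin_of_eventually_nhds hd,
      eventually_nhdsWithin_of_eventually_nhds hmax,
      self_mem_nhdsWithin] with y h1 h2 h3 (hy : y ∈ Ioi a)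
    refine ⟨?_, h2, h3⟩
    have : slope (deriv f) a y = deriv f y / (y - a) := by
      simp [slope, h0, div_eq_inv_mul]
    rw [this] at h1
    have hya : 0 < y - a := by simpa using sub_pos.mpr (show a < y from hy)
    have := mul_pos h1 hya
    rwa [div_mul_cancel₀] at this
    exact ne_of_gt hya
  obtain ⟨b, hb, hIoc⟩ := mem_nhdsGT_iff_exists_Ioc_subset.mp hev2
  have hda : DifferentiableAt ℝ f a := hd.self_of_nhds
  have hcont : ContinuousOn f (Icc a b) := by
    intro y hy
    rcases eq_or_lt_of_le hy.1 with rfl | hlt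
    · exact hda.continuousAt.continuousWithinAt
    · exact ((hIoc ⟨hlt, hy.2⟩).2.1).continuousAt.continuousWithinAt
  have hmono : StrictMonoOn f (Icc a b) := by
    apply strictMonoOn_of_deriv_pos (convex_Icc a b) hcont
    intro y hy
    rw [interior_Icc] at hy
    exact (hIoc ⟨hy.1, le_of_lt hy.2⟩).1
  have : f a < f b := hmono ⟨le_refl a, le_of_lt hb⟩ ⟨le_of_lt hb, le_refl b⟩ hb
  exact absurd ((hIoc ⟨hb, le_refl b⟩).2.2) (not_le.mpr this)

/-- analytic core: at an interior local max / min of `-σ log n - ζ`,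
the transformed equation gives an inequality. -/
lemma fp_eqn_at_point (ψ : ℝ → ℝ) (hψ : ContDiff ℝ 2 ψ) (ν μ σ : ℝ) (hσ : 0 < σ)
    (n nb : ℝ → ℝ) (hn : ContDiff ℝ 2 n)
    (hpos : ∀ x ∈ Icc (0:ℝ) 1, 0 < n x)
    (heq : ∀ x ∈ Ioo (0:ℝ) 1,
      -σ * deriv (deriv n) x - deriv (fun y => deriv ψ y * n y) x
        + (ν / σ) * n x = (μ / σ) * nb x)
    (ζ ζ' ζ'' : ℝ → ℝ) (hζ : ∀ x, HasDerivAt ζ (ζ' x) x)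
    (hζ' : ∀ x, HasDerivAt ζ' (ζ'' x) x)
    (y : ℝ) (hy : y ∈ Ioo (0:ℝ) 1) :
    (IsLocalMax (fun x => -σ * Real.log (n x) - ζ x) y →
      μ * nb y / n y ≤ σ * ζ'' y - σ * deriv (deriv ψ) y
        - ((ζ' y) ^ 2 - deriv ψ y * ζ' y - ν)) ∧
    (IsLocalMin (fun x => -σ * Real.log (n x) - ζ x) y →
      σ * ζ'' y - σ * deriv (deriv ψ) y
        - ((ζ' y) ^ 2 - deriv ψ y * ζ' y - ν) ≤ μ * nb y / n y) := by
  -- basic facts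
  have hny : 0 < n y := hpos y ⟨le_of_lt hy.1, le_of_lt hy.2⟩
  have hnd : Differentiable ℝ n := hn.differentiable (by norm_num)
  have hn1 : ContDiff ℝ 1 (deriv n) := by
    have := (contDiff_succ_iff_deriv (n := 1)).mp (by norm_num at hn ⊢; exact hn)
    exact this.2.2
  have hn'd : Differentiable ℝ (deriv n) := hn1.differentiable (by norm_num)
  have hψd : Differentiable ℝ ψ := hψ.differentiable (by norm_num)
  have hψ1 : ContDiff ℝ 1 (deriv ψ) := by
    have := (contDiff_succ_iff_deriv (n := 1)).mp (by norm_num at hψ ⊢; exact hψ)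
    exact this.2.2
  have hψ'd : Differentiable ℝ (deriv ψ) := hψ1.differentiable (by norm_num)
  -- open set where n > 0
  set V : Set ℝ := (n ⁻¹' Ioi 0) ∩ Ioo 0 1 with hV
  have hVopen : IsOpen V := (isOpen_Ioi.preimage hn.continuous).inter isOpen_Ioo
  have hyV : y ∈ V := ⟨hny, hy⟩
  have hVnhds : V ∈ nhds y := hVopen.mem_nhds hyV
  set u : ℝ → ℝ := fun x => -σ * Real.log (n x) with hu
  set U' : ℝ → ℝ := fun x => -σ * (deriv n x / n x) with hU'
  have hud : ∀ x ∈ V, HasDerivAt u (U' x) x := by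
    intro x hx
    exact (((hnd x).hasDerivAt.log (ne_of_gt hx.1)).const_mul (-σ))
  -- derivative of U' at y
  have hU'd : HasDerivAt U'
      (-σ * ((deriv (deriv n) y * n y - deriv n y * deriv n y) / (n y) ^ 2)) y := by
    exact (((hn'd y).hasDerivAt.div (hnd y).hasDerivAt (ne_of_gt hny)).const_mul (-σ))
  -- the function f = u - ζ
  set f : ℝ → ℝ := fun x => u x - ζ x with hf
  have hfd : ∀ x ∈ V, HasDerivAt f (U' x - ζ' x) x := fun x hx => (hud x hx).sub (hζ x)
  have hfdev : ∀ᶠ x in nhds y, DifferentiableAt ℝ f x := by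
    filter_upwards [hVnhds] with x hx; exact (hfd x hx).differentiableAt
  have hderivf : deriv f =ᶠ[nhds y] fun x => U' x - ζ' x := by
    filter_upwards [hVnhds] with x hx; exact (hfd x hx).deriv
  have hd2 : DifferentiableAt ℝ (deriv f) y := by
    refine (Filter.EventuallyEq.differentiableAt_iff hderivf).mpr ?_
    exact (hU'd.sub (hζ' y)).differentiableAt
  have hderiv2f : deriv (deriv f) y
      = -σ * ((deriv (deriv n) y * n y - deriv n y * deriv n y) / (n y) ^ 2) - ζ'' y := by
    rw [hderivf.deriv_eq]
    exact (hU'd.sub (hζ' y)).deriv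
  -- solve the equation for  deriv (deriv n) y
  have heqy := heq y hy
  have hprod : deriv (fun x => deriv ψ x * n x) y
      = deriv (deriv ψ) y * n y + deriv ψ y * deriv n y := by
    rw [deriv_fun_mul (hψ'd y) (hnd y)]
  rw [hprod] at heqy
  -- key algebraic identity
  have hkey : ∀ z : ℝ, deriv f y = 0 → deriv (deriv f) y = z →
      μ * nb y / n y = σ * (z + ζ'' y) - σ * deriv (deriv ψ) y
        - ((ζ' y) ^ 2 - deriv ψ y * ζ' y - ν) := by
    intro z h1 h2
    have hU'y : U' y = ζ' y := by
      have h3 : deriv f y = U' y - ζ' y := (hfd y hyV).deriv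
      rw [h1] at h3; linarith [h3.symm]
    have hz : z = -σ * ((deriv (deriv n) y * n y - deriv n y * deriv n y) / (n y) ^ 2)
        - ζ'' y := by rw [← h2, hderiv2f]
    rw [hz, ← hU'y]
    have hne : n y ≠ 0 := ne_of_gt hny
    have hσne : σ ≠ 0 := ne_of_gt hσ
    have heqy2 : -(σ^2) * deriv (deriv n) y
        - σ * (deriv (deriv ψ) y * n y + deriv ψ y * deriv n y) + ν * n y = μ * nb y := by
      field_simp at heqy
      linarith
    show μ * nb y / n y
        = σ * (-σ * ((deriv (deriv n) y * n y - deriv n y * deriv n y) / n y ^ 2) - ζ'' y + ζ'' y)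
          - σ * deriv (deriv ψ) y - ((-σ * (deriv n y / n y)) ^ 2
            - deriv ψ y * (-σ * (deriv n y / n y)) - ν)
    field_simp
    linear_combination (-(n y)) * heqy2
  constructor
  · intro hmax
    have h1 : deriv f y = 0 := hmax.deriv_eq_zero
    have h2 : deriv (deriv f) y ≤ 0 := secondDerivTest_max hfdev hd2 hmax
    have := hkey (deriv (deriv f) y) h1 rfl
    rw [this]
    nlinarith [h2, hσ]
  · intro hmin
    have h1 : deriv f y = 0 := hmin.deriv_eq_zero
    have h2 : 0 ≤ deriv (deriv f) y := by
      have := secondDerivTest_max (f := fun x => -f x) (a := y) ?_ ?_ hmin.neg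
      · have hng : deriv (fun x => -f x) =ᶠ[nhds y] fun x => -(deriv f x) := by
          filter_upwards [hfdev.eventually_nhds] with x hx
          exact deriv.neg (f := f)
        rw [hng.deriv_eq] at this
        have : deriv (fun x => -deriv f x) y ≤ 0 := this
        rw [deriv.fun_neg] at this
        linarith
      · filter_upwards [hfdev] with x hx; exact hx.neg
      · have hng : (fun x => -(deriv f x)) =ᶠ[nhds y] deriv (fun x => -f x) := by
          filter_upwards [hfdev.eventually_nhds] with x hx
          exact (deriv.neg (f := f)).symm
        exact (Filter.EventuallyEq.differentiableAt_iff hng.symm).mpr hd2.neg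
    have := hkey (deriv (deriv f) y) h1 rfl
    rw [this]
    nlinarith [h2, hσ]


lemma avg_err' {G : ℝ → ℝ} (hG : Continuous G) {p C δ z : ℝ} (hδ : 0 < δ) (hC : 0 ≤ C)
    (hb : ∀ t ∈ Icc (z - δ) (z + δ), |G t - p| ≤ C) :
    |(∫ t in (z - δ)..(z + δ), G t) / (2 * δ) - p| ≤ C := by
  have hle : z - δ ≤ z + δ := by linarith
  have h1 : (∫ t in (z - δ)..(z + δ), G t) - (2 * δ) * p
      = ∫ t in (z - δ)..(z + δ), (G t - p) := by
    rw [intervalIntegral.integral_sub (hG.intervalIntegrable _ _)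
      (continuous_const.intervalIntegrable _ _), intervalIntegral.integral_const]
    have : (z + δ - (z - δ)) = 2 * δ := by ring
    rw [this]
    simp [smul_eq_mul]
  have h2 : ‖∫ t in (z - δ)..(z + δ), (G t - p)‖ ≤ C * |(z + δ) - (z - δ)| := by
    apply intervalIntegral.norm_integral_le_of_norm_le_const
    intro t ht
    rw [Set.uIoc_of_le hle] at ht
    simpa [Real.norm_eq_abs] using hb t ⟨le_of_lt ht.1, ht.2⟩
  rw [Real.norm_eq_abs] at h2
  have habs : |(z + δ) - (z - δ)| = 2 * δ := by
    rw [abs_of_pos (by linarith)]; ring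
  rw [habs] at h2
  rw [← h1] at h2
  have h3 : (∫ t in (z - δ)..(z + δ), G t) / (2 * δ) - p
      = ((∫ t in (z - δ)..(z + δ), G t) - (2 * δ) * p) / (2 * δ) := by
    field_simp
  rw [h3, abs_div, abs_of_pos (by linarith : (0:ℝ) < 2 * δ), div_le_iff₀ (by linarith)]
  linarith [h2]

lemma select_conv {R Z : ℝ → ℝ} {x₀ r : ℝ} (hr : 0 < r)
    (hIcc : Icc (x₀ - r) (x₀ + r) ⊆ Icc (0:ℝ) 1)
    {u : ℕ → ℝ → ℝ} {ζ : ℕ → ℝ → ℝ} {x : ℕ → ℝ}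
    (hx : ∀ m, x m ∈ Icc (x₀ - r) (x₀ + r))
    (hsel : ∀ m, ∀ z ∈ Icc (x₀ - r) (x₀ + r), u m z - ζ m z ≤ u m (x m) - ζ m (x m))
    (hcomp : ∀ z ∈ Icc (x₀ - r) (x₀ + r), R z - Z z ≤ R x₀ - Z x₀ - (z - x₀) ^ 2)
    (huconv : TendstoUniformlyOn u R atTop (Icc 0 1))
    (hζconv : ∀ ε > 0, ∀ᶠ m in atTop, ∀ z, |ζ m z - Z z| ≤ ε) :
    Tendsto x atTop (nhds x₀) := by
  rw [Metric.tendsto_nhds]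
  intro ε hε
  set ε₁ : ℝ := min (ε / 2) r with hε₁
  have hε₁pos : 0 < ε₁ := lt_min (by linarith) hr
  have hx₀mem : x₀ ∈ Icc (x₀ - r) (x₀ + r) := by
    constructor <;> [linarith; linarith]
  have hA := (Metric.tendstoUniformlyOn_iff.mp huconv) (ε₁ ^ 2 / 4) (by positivity)
  have hB := hζconv (ε₁ ^ 2 / 4) (by positivity)
  filter_upwards [hA, hB] with m hAm hBm
  have h1 : u m x₀ - ζ m x₀ ≤ u m (x m) - ζ m (x m) := hsel m x₀ hx₀mem
  have e1 : |u m (x m) - R (x m)| ≤ ε₁ ^ 2 / 4 := by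
    have := hAm (x m) (hIcc (hx m))
    rw [dist_comm] at this
    exact le_of_lt (by simpa [Real.dist_eq] using this)
  have e2 : |u m x₀ - R x₀| ≤ ε₁ ^ 2 / 4 := by
    have := hAm x₀ (hIcc hx₀mem)
    rw [dist_comm] at this
    exact le_of_lt (by simpa [Real.dist_eq] using this)
  have e3 : |ζ m (x m) - Z (x m)| ≤ ε₁ ^ 2 / 4 := hBm (x m)
  have e4 : |ζ m x₀ - Z x₀| ≤ ε₁ ^ 2 / 4 := hBm x₀
  have hcomp' := hcomp (x m) (hx m)
  have hsq : (x m - x₀) ^ 2 ≤ ε₁ ^ 2 := by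
    have a1 := abs_le.mp e1
    have a2 := abs_le.mp e2
    have a3 := abs_le.mp e3
    have a4 := abs_le.mp e4
    nlinarith [h1, hcomp']
  have : |x m - x₀| ≤ ε₁ := by
    nlinarith [abs_nonneg (x m - x₀), sq_abs (x m - x₀), hε₁pos]
  rw [Real.dist_eq]
  have : ε₁ ≤ ε / 2 := min_le_left _ _
  linarith [this, ‹|x m - x₀| ≤ ε₁›]

set_option maxHeartbeats 1000000 in
lemma fp2_max_branch (ψ₁ ψ₂ : ℝ → ℝ) (hψ₁ : ContDiff ℝ 2 ψ₁) (hψ₂ : ContDiff ℝ 2 ψ₂)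
    (ν₁ ν₂ : ℝ) (hν₁0 : 0 < ν₁) (hν₂0 : 0 < ν₂)
    (σs : ℕ → ℝ) (hσs : ∀ m, 0 < σs m) (hσs0 : Tendsto σs atTop (nhds 0))
    (n₁ n₂ : ℕ → ℝ → ℝ)
    (hc₁ : ∀ m, ContDiff ℝ 2 (n₁ m)) (hc₂ : ∀ m, ContDiff ℝ 2 (n₂ m))
    (hpos : ∀ m, ∀ x ∈ Icc (0:ℝ) 1, 0 < n₁ m x ∧ 0 < n₂ m x)
    (heq₁ : ∀ m, ∀ x ∈ Ioo (0:ℝ) 1,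
      -σs m * deriv (deriv (n₁ m)) x - deriv (fun y => deriv ψ₁ y * n₁ m y) x
        + (ν₁ / σs m) * n₁ m x = (ν₂ / σs m) * n₂ m x)
    (heq₂ : ∀ m, ∀ x ∈ Ioo (0:ℝ) 1,
      -σs m * deriv (deriv (n₂ m)) x - deriv (fun y => deriv ψ₂ y * n₂ m y) x
        + (ν₂ / σs m) * n₂ m x = (ν₁ / σs m) * n₁ m x)
    (R : ℝ → ℝ)
    (hconv₁ : TendstoUniformlyOn (fun m x => -(σs m) * Real.log (n₁ m x)) R atTop (Icc 0 1))
    (hconv₂ : TendstoUniformlyOn (fun m x => -(σs m) * Real.log (n₂ m x)) R atTop (Icc 0 1))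
    (Φ : ℝ → ℝ) (hΦd : ∀ x ∈ Ioo (0:ℝ) 1, DifferentiableAt ℝ Φ x)
    (hΦc : ContinuousOn (deriv Φ) (Ioo 0 1))
    (x₀ : ℝ) (hx₀ : x₀ ∈ Ioo (0:ℝ) 1)
    (hmax : IsLocalMax (fun x => R x - Φ x) x₀) :
    ((deriv Φ x₀) ^ 2 - deriv ψ₁ x₀ * deriv Φ x₀ - ν₁) ≤ 0 ∧
    ((deriv Φ x₀) ^ 2 - deriv ψ₂ x₀ * deriv Φ x₀ - ν₂) ≤ 0 ∧
    ν₁ * ν₂ ≤ ((deriv Φ x₀) ^ 2 - deriv ψ₁ x₀ * deriv Φ x₀ - ν₁)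
      * ((deriv Φ x₀) ^ 2 - deriv ψ₂ x₀ * deriv Φ x₀ - ν₂) := by
  obtain ⟨hx₀0, hx₀1⟩ := hx₀
  obtain ⟨ε₀, hε₀, hball⟩ := Metric.eventually_nhds_iff.mp hmax
  set r : ℝ := min (ε₀ / 2) (min (x₀ / 3) ((1 - x₀) / 3)) with hrdef
  have hr : 0 < r := lt_min (by linarith) (lt_min (by linarith) (by linarith))
  have hr1 : r ≤ ε₀ / 2 := min_le_left _ _
  have hr2 : r ≤ x₀ / 3 := le_trans (min_le_right _ _) (min_le_left _ _)
  have hr3 : r ≤ (1 - x₀) / 3 := le_trans (min_le_right _ _) (min_le_right _ _)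
  have hsub2 : Icc (x₀ - 2*r) (x₀ + 2*r) ⊆ Ioo (0:ℝ) 1 := by
    intro z hz
    rw [mem_Icc] at hz
    constructor <;> [nlinarith [hz.1]; nlinarith [hz.2]]
  have hsub1 : Icc (x₀ - r) (x₀ + r) ⊆ Icc (x₀ - 2*r) (x₀ + 2*r) :=
    Icc_subset_Icc (by linarith) (by linarith)
  have hsubo : Icc (x₀ - r) (x₀ + r) ⊆ Ioo (0:ℝ) 1 := subset_trans hsub1 hsub2
  have hsubI : Icc (x₀ - r) (x₀ + r) ⊆ Icc (0:ℝ) 1 := subset_trans hsubo Ioo_subset_Icc_self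
  have hx₀mem1 : x₀ ∈ Icc (x₀ - r) (x₀ + r) := ⟨by linarith, by linarith⟩
  have hx₀mem2 : x₀ ∈ Icc (x₀ - 2*r) (x₀ + 2*r) := ⟨by linarith, by linarith⟩
  have hmaxI : ∀ z ∈ Icc (x₀ - r) (x₀ + r), R z - Φ z ≤ R x₀ - Φ x₀ := by
    intro z hz
    rw [mem_Icc] at hz
    exact hball (by rw [Real.dist_eq]; rw [abs_lt]; constructor <;> linarith)
  -- clamp
  set c : ℝ → ℝ := fun t => max (x₀ - 2*r) (min t (x₀ + 2*r)) with hcdef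
  have hc_cont : Continuous c := continuous_const.max (continuous_id.min continuous_const)
  have hc_mem : ∀ t, c t ∈ Icc (x₀ - 2*r) (x₀ + 2*r) := by
    intro t
    exact ⟨le_max_left _ _, max_le (by linarith) (min_le_right _ _)⟩
  have hc_id : ∀ t ∈ Icc (x₀ - 2*r) (x₀ + 2*r), c t = t := by
    intro t ht
    rw [hcdef]
    simp only
    rw [min_eq_left ht.2, max_eq_right ht.1]
  set gg : ℝ → ℝ := fun t => deriv Φ (c t) with hggdef
  have hggcont : Continuous gg := hΦc.comp_continuous hc_cont (fun t => hsub2 (hc_mem t))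
  have hggeq : ∀ t ∈ Icc (x₀ - 2*r) (x₀ + 2*r), gg t = deriv Φ t := by
    intro t ht
    rw [hggdef]
    simp only
    rw [hc_id t ht]
  have hggx₀ : gg x₀ = deriv Φ x₀ := hggeq x₀ hx₀mem2
  obtain ⟨Cg, hCgIcc⟩ := isCompact_Icc.exists_bound_of_continuousOn
    (s := Icc (x₀ - 2*r) (x₀ + 2*r)) hggcont.continuousOn
  have hCg : ∀ t, |gg t| ≤ Cg := by
    intro t
    have h1 : gg t = gg (c t) := by
      rw [hggdef]; simp only; rw [hc_id (c t) (hc_mem t)]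
    rw [h1]
    simpa [Real.norm_eq_abs] using hCgIcc (c t) (hc_mem t)
  have hCg0 : 0 ≤ Cg := le_trans (abs_nonneg _) (hCg 0)
  -- antiderivatives
  set F : ℝ → ℝ := fun z => ∫ t in (0:ℝ)..z, gg t with hFdef
  have hF : ∀ z, HasDerivAt F (gg z) z := fun z =>
    (intervalIntegral.integral_hasStrictDerivAt_right (hggcont.intervalIntegrable _ _)
      (hggcont.stronglyMeasurable.stronglyMeasurableAtFilter) hggcont.continuousAt).hasDerivAt
  have hFcont : Continuous F := by
    rw [continuous_iff_continuousAt]; exact fun z => (hF z).continuousAt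
  have hFdiff : ∀ w z : ℝ, F z - F w = ∫ t in w..z, gg t := by
    intro w z
    have h := intervalIntegral.integral_add_adjacent_intervals (a := (0:ℝ)) (b := w) (c := z)
      (hggcont.intervalIntegrable (μ := MeasureTheory.volume) _ _) (hggcont.intervalIntegrable (μ := MeasureTheory.volume) _ _)
    rw [hFdef]; simp only; linarith [h]
  have hFlip : ∀ w z : ℝ, |F z - F w| ≤ Cg * |z - w| := by
    intro w z
    rw [hFdiff w z]
    have h := intervalIntegral.norm_integral_le_of_norm_le_const (C := Cg) (f := gg)
      (a := w) (b := z) (fun t _ => by simpa [Real.norm_eq_abs] using hCg t)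
    simpa [Real.norm_eq_abs] using h
  have hFΦ : ∀ z ∈ Icc (x₀ - 2*r) (x₀ + 2*r), F z - F x₀ = Φ z - Φ x₀ := by
    intro z hz
    rw [hFdiff x₀ z]
    have huIcc : uIcc x₀ z ⊆ Icc (x₀ - 2*r) (x₀ + 2*r) := uIcc_subset_Icc hx₀mem2 hz
    rw [intervalIntegral.integral_congr (g := deriv Φ) (fun t ht => hggeq t (huIcc ht))]
    apply intervalIntegral.integral_eq_sub_of_hasDerivAt
    · intro t ht; exact (hΦd t (hsub2 (huIcc ht))).hasDerivAt
    · exact (hΦc.mono (fun t ht => hsub2 (huIcc ht))).intervalIntegrable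
  set A : ℝ → ℝ := fun z => ∫ t in (0:ℝ)..z, F t with hAdef
  have hA : ∀ z, HasDerivAt A (F z) z := fun z =>
    (intervalIntegral.integral_hasStrictDerivAt_right (hFcont.intervalIntegrable _ _)
      (hFcont.stronglyMeasurable.stronglyMeasurableAtFilter) hFcont.continuousAt).hasDerivAt
  have hAdiff : ∀ w z : ℝ, A z - A w = ∫ t in w..z, F t := by
    intro w z
    have h := intervalIntegral.integral_add_adjacent_intervals (a := (0:ℝ)) (b := w) (c := z)
      (hFcont.intervalIntegrable (μ := MeasureTheory.volume) _ _) (hFcont.intervalIntegrable (μ := MeasureTheory.volume) _ _)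
    rw [hAdef]; simp only; linarith [h]
  -- delta
  set δ : ℕ → ℝ := fun m => Real.sqrt (σs m) with hδdef
  have hδpos : ∀ m, 0 < δ m := fun m => Real.sqrt_pos.mpr (hσs m)
  have hδ0 : Tendsto δ atTop (nhds 0) := by
    have h := (Real.continuous_sqrt.tendsto 0).comp hσs0
    simpa [Real.sqrt_zero, Function.comp_def] using h
  have hσδ : ∀ m, σs m / δ m = δ m := fun m => by rw [hδdef]; exact Real.div_sqrt
  -- test functions
  set ζ : ℕ → ℝ → ℝ := fun m x => (A (x + δ m) - A (x - δ m)) / (2 * δ m) + (x - x₀)^2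
    with hζdef
  set ζ' : ℕ → ℝ → ℝ := fun m x => (F (x + δ m) - F (x - δ m)) / (2 * δ m) + 2*(x - x₀)
    with hζ'def
  set ζ'' : ℕ → ℝ → ℝ := fun m x => (gg (x + δ m) - gg (x - δ m)) / (2 * δ m) + 2
    with hζ''def
  have hζd : ∀ m x, HasDerivAt (ζ m) (ζ' m x) x := by
    intro m x
    have h1 : HasDerivAt (fun x => A (x + δ m)) (F (x + δ m)) x := by
      simpa [Function.comp_def] using HasDerivAt.comp x (hA (x + δ m)) ((hasDerivAt_id x).add_const (δ m))
    have h2 : HasDerivAt (fun x => A (x - δ m)) (F (x - δ m)) x := by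
      simpa [Function.comp_def] using HasDerivAt.comp x (hA (x - δ m)) ((hasDerivAt_id x).sub_const (δ m))
    have h3 : HasDerivAt (fun x => (x - x₀)^2) (2*(x - x₀)) x := by
      have h := ((hasDerivAt_id x).sub_const x₀).pow 2; simp at h; exact h
    exact ((h1.sub h2).div_const (2 * δ m)).add h3
  have hζ'd : ∀ m x, HasDerivAt (ζ' m) (ζ'' m x) x := by
    intro m x
    have h1 : HasDerivAt (fun x => F (x + δ m)) (gg (x + δ m)) x := by
      simpa [Function.comp_def] using HasDerivAt.comp x (hF (x + δ m)) ((hasDerivAt_id x).add_const (δ m))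
    have h2 : HasDerivAt (fun x => F (x - δ m)) (gg (x - δ m)) x := by
      simpa [Function.comp_def] using HasDerivAt.comp x (hF (x - δ m)) ((hasDerivAt_id x).sub_const (δ m))
    have h3 : HasDerivAt (fun x => 2*(x - x₀)) 2 x := by
      simpa using ((hasDerivAt_id x).sub_const x₀).const_mul 2
    exact ((h1.sub h2).div_const (2 * δ m)).add h3
  have hζcont : ∀ m, Continuous (ζ m) := by
    intro m
    rw [continuous_iff_continuousAt]; exact fun z => (hζd m z).continuousAt
  -- u functions
  set u₁ : ℕ → ℝ → ℝ := fun m x => -σs m * Real.log (n₁ m x) with hu₁def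
  set u₂ : ℕ → ℝ → ℝ := fun m x => -σs m * Real.log (n₂ m x) with hu₂def
  have hu₁cont : ∀ m, ContinuousOn (u₁ m) (Icc (0:ℝ) 1) := by
    intro m z hz
    exact (continuousAt_const.mul
      (((hc₁ m).continuous.continuousAt).log (ne_of_gt (hpos m z hz).1))).continuousWithinAt
  have hu₂cont : ∀ m, ContinuousOn (u₂ m) (Icc (0:ℝ) 1) := by
    intro m z hz
    exact (continuousAt_const.mul
      (((hc₂ m).continuous.continuousAt).log (ne_of_gt (hpos m z hz).2))).continuousWithinAt
  -- selection of max points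
  have hsel₁ : ∀ m, ∃ y ∈ Icc (x₀ - r) (x₀ + r),
      IsMaxOn (fun x => u₁ m x - ζ m x) (Icc (x₀ - r) (x₀ + r)) y := fun m =>
    isCompact_Icc.exists_isMaxOn ⟨x₀, hx₀mem1⟩
      (((hu₁cont m).mono hsubI).sub (hζcont m).continuousOn)
  have hsel₂ : ∀ m, ∃ y ∈ Icc (x₀ - r) (x₀ + r),
      IsMaxOn (fun x => u₂ m x - ζ m x) (Icc (x₀ - r) (x₀ + r)) y := fun m =>
    isCompact_Icc.exists_isMaxOn ⟨x₀, hx₀mem1⟩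
      (((hu₂cont m).mono hsubI).sub (hζcont m).continuousOn)
  choose X₁ hX₁mem hX₁max using hsel₁
  choose X₂ hX₂mem hX₂max using hsel₂
  have hX₁max' : ∀ m, ∀ z ∈ Icc (x₀ - r) (x₀ + r),
      u₁ m z - ζ m z ≤ u₁ m (X₁ m) - ζ m (X₁ m) := fun m => isMaxOn_iff.mp (hX₁max m)
  have hX₂max' : ∀ m, ∀ z ∈ Icc (x₀ - r) (x₀ + r),
      u₂ m z - ζ m z ≤ u₂ m (X₂ m) - ζ m (X₂ m) := fun m => isMaxOn_iff.mp (hX₂max m)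
  -- ζ uniform error
  have hζerr : ∀ ε > 0, ∀ᶠ m in atTop, ∀ z, |ζ m z - (F z + (z - x₀)^2)| ≤ ε := by
    intro ε hε
    have hev : ∀ᶠ m in atTop, δ m < ε / (Cg + 1) := by
      have h := (Metric.tendsto_nhds.mp hδ0) (ε / (Cg + 1)) (by positivity)
      filter_upwards [h] with m hm
      rw [Real.dist_eq, sub_zero, abs_of_pos (hδpos m)] at hm
      exact hm
    filter_upwards [hev] with m hm z
    have h1 : ζ m z - (F z + (z - x₀)^2)
        = (∫ t in (z - δ m)..(z + δ m), F t) / (2 * δ m) - F z := by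
      rw [hζdef]; simp only; rw [← hAdiff (z - δ m) (z + δ m)]; ring
    rw [h1]
    have hb : ∀ t ∈ Icc (z - δ m) (z + δ m), |F t - F z| ≤ Cg * δ m := by
      intro t ht
      refine le_trans (hFlip z t) ?_
      apply mul_le_mul_of_nonneg_left _ hCg0
      rw [abs_le]; constructor <;> [linarith [ht.1]; linarith [ht.2]]
    have h2 := avg_err' hFcont (hδpos m) (by positivity : (0:ℝ) ≤ Cg * δ m) hb
    refine le_trans h2 ?_
    have he' : (Cg + 1) * (ε / (Cg + 1)) = ε := by field_simp
    have h3 : (Cg + 1) * δ m ≤ (Cg + 1) * (ε / (Cg + 1)) :=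
      mul_le_mul_of_nonneg_left hm.le (by linarith)
    rw [he'] at h3
    nlinarith [hδpos m, h3]
  -- comparison for select_conv
  have hcomp : ∀ z ∈ Icc (x₀ - r) (x₀ + r),
      R z - (F z + (z - x₀)^2) ≤ R x₀ - (F x₀ + (x₀ - x₀)^2) - (z - x₀)^2 := by
    intro z hz
    have h1 := hmaxI z hz
    have h2 := hFΦ z (hsub1 hz)
    nlinarith [h1, h2]
  -- convergence of the max points
  have hT1 : Tendsto X₁ atTop (nhds x₀) :=
    select_conv hr hsubI hX₁mem hX₁max' hcomp hconv₁ hζerr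
  have hT2 : Tendsto X₂ atTop (nhds x₀) :=
    select_conv hr hsubI hX₂mem hX₂max' hcomp hconv₂ hζerr
    -- derivative limit along any sequence converging to x₀
  have hT2gen : ∀ (x : ℕ → ℝ), Tendsto x atTop (nhds x₀) →
      Tendsto (fun m => ζ' m (x m)) atTop (nhds (deriv Φ x₀)) := by
    intro x hx
    have haux : Tendsto (fun m => (F (x m + δ m) - F (x m - δ m)) / (2 * δ m)) atTop
        (nhds (deriv Φ x₀)) := by
      rw [Metric.tendsto_nhds]
      intro ε hε
      rcases Metric.continuousAt_iff.mp hggcont.continuousAt (ε/2) (by linarith) with ⟨ρ, hρ, hρb⟩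
      have hev1 : ∀ᶠ m in atTop, |x m - x₀| < ρ/2 := by
        have h := (Metric.tendsto_nhds.mp hx) (ρ/2) (by linarith)
        filter_upwards [h] with m hm
        rwa [Real.dist_eq] at hm
      have hev2 : ∀ᶠ m in atTop, δ m < ρ/2 := by
        have h := (Metric.tendsto_nhds.mp hδ0) (ρ/2) (by linarith)
        filter_upwards [h] with m hm
        rw [Real.dist_eq, sub_zero, abs_of_pos (hδpos m)] at hm
        exact hm
      filter_upwards [hev1, hev2] with m h1 h2
      rw [Real.dist_eq]
      have hFd : F (x m + δ m) - F (x m - δ m) = ∫ t in (x m - δ m)..(x m + δ m), gg t :=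
        hFdiff _ _
      rw [hFd]
      have hb : ∀ t ∈ Icc (x m - δ m) (x m + δ m), |gg t - deriv Φ x₀| ≤ ε/2 := by
        intro t ht
        have htx : dist t x₀ < ρ := by
          rw [Real.dist_eq]
          have h3 := abs_lt.mp h1
          rw [abs_lt]
          constructor <;> [linarith [ht.1]; linarith [ht.2]]
        have h4 := hρb htx
        rw [Real.dist_eq, hggx₀] at h4
        exact le_of_lt h4
      have h5 := avg_err' hggcont (hδpos m) (by linarith : (0:ℝ) ≤ ε/2) hb
      linarith [h5]
    have haux2 : Tendsto (fun m => 2*(x m - x₀)) atTop (nhds 0) := by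
      have h := (hx.sub_const x₀).const_mul (2:ℝ)
      simpa using h
    have h := haux.add haux2
    simpa using h
  -- σ ζ'' → 0 along any sequence
  have hT3gen : ∀ (x : ℕ → ℝ),
      Tendsto (fun m => σs m * ζ'' m (x m)) atTop (nhds 0) := by
    intro x
    have h1 : Tendsto (fun m => σs m * ((gg (x m + δ m) - gg (x m - δ m)) / (2 * δ m)))
        atTop (nhds 0) := by
      apply squeeze_zero_norm (a := fun m => δ m * Cg)
      · intro m
        have hnum : |gg (x m + δ m) - gg (x m - δ m)| ≤ 2 * Cg := by
          have h1 := abs_lt.mp (lt_of_le_of_lt (hCg (x m + δ m)) (lt_add_one Cg))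
          have ha := abs_le.mp (hCg (x m + δ m))
          have hb := abs_le.mp (hCg (x m - δ m))
          rw [abs_le]
          constructor <;> linarith
        have hq : |(gg (x m + δ m) - gg (x m - δ m)) / (2 * δ m)| ≤ Cg / δ m := by
          rw [abs_div, abs_of_pos (by linarith [hδpos m] : (0:ℝ) < 2 * δ m)]
          rw [div_le_div_iff₀ (by linarith [hδpos m]) (hδpos m)]
          nlinarith [hnum, hδpos m]
        calc ‖σs m * ((gg (x m + δ m) - gg (x m - δ m)) / (2 * δ m))‖
            = σs m * |(gg (x m + δ m) - gg (x m - δ m)) / (2 * δ m)| := by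
              rw [Real.norm_eq_abs, abs_mul, abs_of_pos (hσs m)]
          _ ≤ σs m * (Cg / δ m) := mul_le_mul_of_nonneg_left hq (le_of_lt (hσs m))
          _ = δ m * Cg := by
              rw [show σs m * (Cg / δ m) = (σs m / δ m) * Cg by ring, hσδ m]
      · simpa using hδ0.mul_const Cg
    have h2 : Tendsto (fun m => σs m * 2) atTop (nhds 0) := by
      simpa using hσs0.mul_const 2
    have h := h1.add h2
    rw [hζ''def]
    simp only [mul_add] at h ⊢
    simpa using h
  -- σ h(x m) → 0
  have hT4gen : ∀ (x : ℕ → ℝ) (h : ℝ → ℝ), Continuous h → Tendsto x atTop (nhds x₀) →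
      Tendsto (fun m => σs m * h (x m)) atTop (nhds 0) := by
    intro x h hh hx
    have := hσs0.mul ((hh.tendsto x₀).comp hx)
    simpa using this
  -- second derivatives of ψ continuous
  have hψ₁1 : ContDiff ℝ 1 (deriv ψ₁) := by
    have h := (contDiff_succ_iff_deriv (n := 1)).mp (by norm_num at hψ₁ ⊢; exact hψ₁)
    exact h.2.2
  have hψ₂1 : ContDiff ℝ 1 (deriv ψ₂) := by
    have h := (contDiff_succ_iff_deriv (n := 1)).mp (by norm_num at hψ₂ ⊢; exact hψ₂)
    exact h.2.2
  have hψ₁'' : Continuous (deriv (deriv ψ₁)) := hψ₁1.continuous_deriv le_rfl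
  have hψ₂'' : Continuous (deriv (deriv ψ₂)) := hψ₂1.continuous_deriv le_rfl
  have hψ₁' : Continuous (deriv ψ₁) := hψ₁.continuous_deriv (by norm_num)
  have hψ₂' : Continuous (deriv ψ₂) := hψ₂.continuous_deriv (by norm_num)
  -- eventual interior and local max
  have hev₁ : ∀ᶠ m in atTop, X₁ m ∈ Ioo (0:ℝ) 1 ∧
      IsLocalMax (fun x => u₁ m x - ζ m x) (X₁ m) := by
    have h := (Metric.tendsto_nhds.mp hT1) r hr
    filter_upwards [h] with m hm
    rw [Real.dist_eq] at hm
    obtain ⟨ha, hb⟩ := abs_lt.mp hm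
    refine ⟨hsubo ⟨by linarith, by linarith⟩, ?_⟩
    exact (hX₁max m).isLocalMax (Icc_mem_nhds (by linarith) (by linarith))
  have hev₂ : ∀ᶠ m in atTop, X₂ m ∈ Ioo (0:ℝ) 1 ∧
      IsLocalMax (fun x => u₂ m x - ζ m x) (X₂ m) := by
    have h := (Metric.tendsto_nhds.mp hT2) r hr
    filter_upwards [h] with m hm
    rw [Real.dist_eq] at hm
    obtain ⟨ha, hb⟩ := abs_lt.mp hm
    refine ⟨hsubo ⟨by linarith, by linarith⟩, ?_⟩
    exact (hX₂max m).isLocalMax (Icc_mem_nhds (by linarith) (by linarith))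
  -- the key eventual inequalities
  set B₁ : ℕ → ℝ := fun m => σs m * ζ'' m (X₁ m) - σs m * deriv (deriv ψ₁) (X₁ m)
    - ((ζ' m (X₁ m))^2 - deriv ψ₁ (X₁ m) * ζ' m (X₁ m) - ν₁) with hB₁def
  set B₂ : ℕ → ℝ := fun m => σs m * ζ'' m (X₂ m) - σs m * deriv (deriv ψ₂) (X₂ m)
    - ((ζ' m (X₂ m))^2 - deriv ψ₂ (X₂ m) * ζ' m (X₂ m) - ν₂) with hB₂def
  have hE₁ : ∀ᶠ m in atTop, ν₂ * n₂ m (X₁ m) / n₁ m (X₁ m) ≤ B₁ m := by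
    filter_upwards [hev₁] with m hm
    have h := (fp_eqn_at_point ψ₁ hψ₁ ν₁ ν₂ (σs m) (hσs m) (n₁ m) (n₂ m) (hc₁ m)
      (fun z hz => (hpos m z hz).1) (heq₁ m) (ζ m) (ζ' m) (ζ'' m) (hζd m) (hζ'd m)
      (X₁ m) hm.1).1 hm.2
    rw [hB₁def]
    linarith [h]
  have hE₂ : ∀ᶠ m in atTop, ν₁ * n₁ m (X₂ m) / n₂ m (X₂ m) ≤ B₂ m := by
    filter_upwards [hev₂] with m hm
    have h := (fp_eqn_at_point ψ₂ hψ₂ ν₂ ν₁ (σs m) (hσs m) (n₂ m) (n₁ m) (hc₂ m)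
      (fun z hz => (hpos m z hz).2) (heq₂ m) (ζ m) (ζ' m) (ζ'' m) (hζd m) (hζ'd m)
      (X₂ m) hm.1).1 hm.2
    rw [hB₂def]
    linarith [h]
  -- limits of B sequences
  have hβ₁lim : Tendsto (fun m => (ζ' m (X₁ m))^2 - deriv ψ₁ (X₁ m) * ζ' m (X₁ m) - ν₁)
      atTop (nhds ((deriv Φ x₀)^2 - deriv ψ₁ x₀ * deriv Φ x₀ - ν₁)) := by
    have h1 := hT2gen X₁ hT1
    have h2 : Tendsto (fun m => deriv ψ₁ (X₁ m)) atTop (nhds (deriv ψ₁ x₀)) :=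
      (hψ₁'.tendsto x₀).comp hT1
    exact ((h1.pow 2).sub (h2.mul h1)).sub tendsto_const_nhds
  have hβ₂lim : Tendsto (fun m => (ζ' m (X₂ m))^2 - deriv ψ₂ (X₂ m) * ζ' m (X₂ m) - ν₂)
      atTop (nhds ((deriv Φ x₀)^2 - deriv ψ₂ x₀ * deriv Φ x₀ - ν₂)) := by
    have h1 := hT2gen X₂ hT2
    have h2 : Tendsto (fun m => deriv ψ₂ (X₂ m)) atTop (nhds (deriv ψ₂ x₀)) :=
      (hψ₂'.tendsto x₀).comp hT2
    exact ((h1.pow 2).sub (h2.mul h1)).sub tendsto_const_nhds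
  have herr₁ : Tendsto (fun m => σs m * ζ'' m (X₁ m) - σs m * deriv (deriv ψ₁) (X₁ m))
      atTop (nhds 0) := by
    have h := (hT3gen X₁).sub (hT4gen X₁ _ hψ₁'' hT1)
    simpa using h
  have herr₂ : Tendsto (fun m => σs m * ζ'' m (X₂ m) - σs m * deriv (deriv ψ₂) (X₂ m))
      atTop (nhds 0) := by
    have h := (hT3gen X₂).sub (hT4gen X₂ _ hψ₂'' hT2)
    simpa using h
  have hB₁lim : Tendsto B₁ atTop
      (nhds (0 - ((deriv Φ x₀)^2 - deriv ψ₁ x₀ * deriv Φ x₀ - ν₁))) := herr₁.sub hβ₁lim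
  have hB₂lim : Tendsto B₂ atTop
      (nhds (0 - ((deriv Φ x₀)^2 - deriv ψ₂ x₀ * deriv Φ x₀ - ν₂))) := herr₂.sub hβ₂lim
  -- positivity of quotients
  have hq₁ : ∀ m, 0 < ν₂ * n₂ m (X₁ m) / n₁ m (X₁ m) := by
    intro m
    have h := hpos m (X₁ m) (hsubI (hX₁mem m))
    exact div_pos (mul_pos hν₂0 h.2) h.1
  have hq₂ : ∀ m, 0 < ν₁ * n₁ m (X₂ m) / n₂ m (X₂ m) := by
    intro m
    have h := hpos m (X₂ m) (hsubI (hX₂mem m))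
    exact div_pos (mul_pos hν₁0 h.1) h.2
  -- first two conclusions
  have hcc₁ : (deriv Φ x₀)^2 - deriv ψ₁ x₀ * deriv Φ x₀ - ν₁ ≤ 0 := by
    have hev : (fun m => (ζ' m (X₁ m))^2 - deriv ψ₁ (X₁ m) * ζ' m (X₁ m) - ν₁)
        ≤ᶠ[atTop] (fun m => σs m * ζ'' m (X₁ m) - σs m * deriv (deriv ψ₁) (X₁ m)) := by
      filter_upwards [hE₁] with m hm
      simp only [hB₁def] at hm
      have h2 := lt_of_lt_of_le (hq₁ m) hm
      linarith
    exact le_of_tendsto_of_tendsto hβ₁lim herr₁ hev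
  have hcc₂ : (deriv Φ x₀)^2 - deriv ψ₂ x₀ * deriv Φ x₀ - ν₂ ≤ 0 := by
    have hev : (fun m => (ζ' m (X₂ m))^2 - deriv ψ₂ (X₂ m) * ζ' m (X₂ m) - ν₂)
        ≤ᶠ[atTop] (fun m => σs m * ζ'' m (X₂ m) - σs m * deriv (deriv ψ₂) (X₂ m)) := by
      filter_upwards [hE₂] with m hm
      simp only [hB₂def] at hm
      have h2 := lt_of_lt_of_le (hq₂ m) hm
      linarith
    exact le_of_tendsto_of_tendsto hβ₂lim herr₂ hev
  -- cross inequality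
  have hcross : ∀ m, ν₁ * ν₂ ≤ (ν₂ * n₂ m (X₁ m) / n₁ m (X₁ m))
      * (ν₁ * n₁ m (X₂ m) / n₂ m (X₂ m)) := by
    intro m
    have c1 := hX₁max' m (X₂ m) (hX₂mem m)
    have c2 := hX₂max' m (X₁ m) (hX₁mem m)
    have p11 : 0 < n₁ m (X₁ m) := (hpos m (X₁ m) (hsubI (hX₁mem m))).1
    have p21 : 0 < n₂ m (X₁ m) := (hpos m (X₁ m) (hsubI (hX₁mem m))).2
    have p12 : 0 < n₁ m (X₂ m) := (hpos m (X₂ m) (hsubI (hX₂mem m))).1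
    have p22 : 0 < n₂ m (X₂ m) := (hpos m (X₂ m) (hsubI (hX₂mem m))).2
    have hσm := hσs m
    have hlog : Real.log (n₁ m (X₁ m)) + Real.log (n₂ m (X₂ m))
        ≤ Real.log (n₁ m (X₂ m)) + Real.log (n₂ m (X₁ m)) := by
      rw [hu₁def] at c1
      rw [hu₂def] at c2
      simp only at c1 c2
      have hmul := (mul_le_mul_iff_of_pos_left hσm).mpr
        (le_of_eq (rfl : Real.log (n₁ m (X₁ m)) + Real.log (n₂ m (X₂ m))
          = Real.log (n₁ m (X₁ m)) + Real.log (n₂ m (X₂ m))))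
      apply le_of_mul_le_mul_left _ hσm
      nlinarith [c1, c2]
    have hmul : n₁ m (X₁ m) * n₂ m (X₂ m) ≤ n₁ m (X₂ m) * n₂ m (X₁ m) := by
      rw [← Real.log_mul (ne_of_gt p11) (ne_of_gt p22),
        ← Real.log_mul (ne_of_gt p12) (ne_of_gt p21)] at hlog
      exact (Real.log_le_log_iff (by positivity) (by positivity)).mp hlog
    rw [div_mul_div_comm, le_div_iff₀ (by positivity)]
    nlinarith [mul_le_mul_of_nonneg_left hmul (le_of_lt (mul_pos hν₁0 hν₂0))]
  -- product conclusion
  have hcc₃ : ν₁ * ν₂ ≤ ((deriv Φ x₀)^2 - deriv ψ₁ x₀ * deriv Φ x₀ - ν₁)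
      * ((deriv Φ x₀)^2 - deriv ψ₂ x₀ * deriv Φ x₀ - ν₂) := by
    have hevB : (fun _ => ν₁ * ν₂) ≤ᶠ[atTop] (fun m => B₁ m * B₂ m) := by
      filter_upwards [hE₁, hE₂] with m h₁ h₂
      calc ν₁ * ν₂ ≤ (ν₂ * n₂ m (X₁ m) / n₁ m (X₁ m)) * (ν₁ * n₁ m (X₂ m) / n₂ m (X₂ m)) :=
            hcross m
        _ ≤ B₁ m * B₂ m :=
            mul_le_mul h₁ h₂ (le_of_lt (hq₂ m)) (le_trans (le_of_lt (hq₁ m)) h₁)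
    have h := le_of_tendsto_of_tendsto tendsto_const_nhds (hB₁lim.mul hB₂lim) hevB
    calc ν₁ * ν₂ ≤ (0 - ((deriv Φ x₀)^2 - deriv ψ₁ x₀ * deriv Φ x₀ - ν₁))
          * (0 - ((deriv Φ x₀)^2 - deriv ψ₂ x₀ * deriv Φ x₀ - ν₂)) := h
      _ = ((deriv Φ x₀)^2 - deriv ψ₁ x₀ * deriv Φ x₀ - ν₁)
          * ((deriv Φ x₀)^2 - deriv ψ₂ x₀ * deriv Φ x₀ - ν₂) := by ring
  exact ⟨hcc₁, hcc₂, hcc₃⟩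

set_option maxHeartbeats 1000000 in
lemma fp2_min_branch (ψ₁ ψ₂ : ℝ → ℝ) (hψ₁ : ContDiff ℝ 2 ψ₁) (hψ₂ : ContDiff ℝ 2 ψ₂)
    (ν₁ ν₂ : ℝ) (hν₁0 : 0 < ν₁) (hν₂0 : 0 < ν₂)
    (σs : ℕ → ℝ) (hσs : ∀ m, 0 < σs m) (hσs0 : Tendsto σs atTop (nhds 0))
    (n₁ n₂ : ℕ → ℝ → ℝ)
    (hc₁ : ∀ m, ContDiff ℝ 2 (n₁ m)) (hc₂ : ∀ m, ContDiff ℝ 2 (n₂ m))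
    (hpos : ∀ m, ∀ x ∈ Icc (0:ℝ) 1, 0 < n₁ m x ∧ 0 < n₂ m x)
    (heq₁ : ∀ m, ∀ x ∈ Ioo (0:ℝ) 1,
      -σs m * deriv (deriv (n₁ m)) x - deriv (fun y => deriv ψ₁ y * n₁ m y) x
        + (ν₁ / σs m) * n₁ m x = (ν₂ / σs m) * n₂ m x)
    (heq₂ : ∀ m, ∀ x ∈ Ioo (0:ℝ) 1,
      -σs m * deriv (deriv (n₂ m)) x - deriv (fun y => deriv ψ₂ y * n₂ m y) x
        + (ν₂ / σs m) * n₂ m x = (ν₁ / σs m) * n₁ m x)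
    (R : ℝ → ℝ)
    (hconv₁ : TendstoUniformlyOn (fun m x => -(σs m) * Real.log (n₁ m x)) R atTop (Icc 0 1))
    (hconv₂ : TendstoUniformlyOn (fun m x => -(σs m) * Real.log (n₂ m x)) R atTop (Icc 0 1))
    (Φ : ℝ → ℝ) (hΦd : ∀ x ∈ Ioo (0:ℝ) 1, DifferentiableAt ℝ Φ x)
    (hΦc : ContinuousOn (deriv Φ) (Ioo 0 1))
    (x₀ : ℝ) (hx₀ : x₀ ∈ Ioo (0:ℝ) 1)
    (hmin : IsLocalMin (fun x => R x - Φ x) x₀) :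
    max (-((deriv Φ x₀) ^ 2 - deriv ψ₁ x₀ * deriv Φ x₀ - ν₁)) 0
      * max (-((deriv Φ x₀) ^ 2 - deriv ψ₂ x₀ * deriv Φ x₀ - ν₂)) 0 ≤ ν₁ * ν₂ := by
  obtain ⟨hx₀0, hx₀1⟩ := hx₀
  obtain ⟨ε₀, hε₀, hball⟩ := Metric.eventually_nhds_iff.mp hmin
  set r : ℝ := min (ε₀ / 2) (min (x₀ / 3) ((1 - x₀) / 3)) with hrdef
  have hr : 0 < r := lt_min (by linarith) (lt_min (by linarith) (by linarith))
  have hr1 : r ≤ ε₀ / 2 := min_le_left _ _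
  have hr2 : r ≤ x₀ / 3 := le_trans (min_le_right _ _) (min_le_left _ _)
  have hr3 : r ≤ (1 - x₀) / 3 := le_trans (min_le_right _ _) (min_le_right _ _)
  have hsub2 : Icc (x₀ - 2*r) (x₀ + 2*r) ⊆ Ioo (0:ℝ) 1 := by
    intro z hz
    rw [mem_Icc] at hz
    constructor <;> [nlinarith [hz.1]; nlinarith [hz.2]]
  have hsub1 : Icc (x₀ - r) (x₀ + r) ⊆ Icc (x₀ - 2*r) (x₀ + 2*r) :=
    Icc_subset_Icc (by linarith) (by linarith)
  have hsubo : Icc (x₀ - r) (x₀ + r) ⊆ Ioo (0:ℝ) 1 := subset_trans hsub1 hsub2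
  have hsubI : Icc (x₀ - r) (x₀ + r) ⊆ Icc (0:ℝ) 1 := subset_trans hsubo Ioo_subset_Icc_self
  have hx₀mem1 : x₀ ∈ Icc (x₀ - r) (x₀ + r) := ⟨by linarith, by linarith⟩
  have hx₀mem2 : x₀ ∈ Icc (x₀ - 2*r) (x₀ + 2*r) := ⟨by linarith, by linarith⟩
  have hminI : ∀ z ∈ Icc (x₀ - r) (x₀ + r), R x₀ - Φ x₀ ≤ R z - Φ z := by
    intro z hz
    rw [mem_Icc] at hz
    exact hball (by rw [Real.dist_eq]; rw [abs_lt]; constructor <;> linarith)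
  -- clamp
  set c : ℝ → ℝ := fun t => max (x₀ - 2*r) (min t (x₀ + 2*r)) with hcdef
  have hc_cont : Continuous c := continuous_const.max (continuous_id.min continuous_const)
  have hc_mem : ∀ t, c t ∈ Icc (x₀ - 2*r) (x₀ + 2*r) := by
    intro t
    exact ⟨le_max_left _ _, max_le (by linarith) (min_le_right _ _)⟩
  have hc_id : ∀ t ∈ Icc (x₀ - 2*r) (x₀ + 2*r), c t = t := by
    intro t ht
    rw [hcdef]
    simp only
    rw [min_eq_left ht.2, max_eq_right ht.1]
  set gg : ℝ → ℝ := fun t => deriv Φ (c t) with hggdef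
  have hggcont : Continuous gg := hΦc.comp_continuous hc_cont (fun t => hsub2 (hc_mem t))
  have hggeq : ∀ t ∈ Icc (x₀ - 2*r) (x₀ + 2*r), gg t = deriv Φ t := by
    intro t ht
    rw [hggdef]
    simp only
    rw [hc_id t ht]
  have hggx₀ : gg x₀ = deriv Φ x₀ := hggeq x₀ hx₀mem2
  obtain ⟨Cg, hCgIcc⟩ := isCompact_Icc.exists_bound_of_continuousOn
    (s := Icc (x₀ - 2*r) (x₀ + 2*r)) hggcont.continuousOn
  have hCg : ∀ t, |gg t| ≤ Cg := by
    intro t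
    have h1 : gg t = gg (c t) := by
      rw [hggdef]; simp only; rw [hc_id (c t) (hc_mem t)]
    rw [h1]
    simpa [Real.norm_eq_abs] using hCgIcc (c t) (hc_mem t)
  have hCg0 : 0 ≤ Cg := le_trans (abs_nonneg _) (hCg 0)
  -- antiderivatives
  set F : ℝ → ℝ := fun z => ∫ t in (0:ℝ)..z, gg t with hFdef
  have hF : ∀ z, HasDerivAt F (gg z) z := fun z =>
    (intervalIntegral.integral_hasStrictDerivAt_right (hggcont.intervalIntegrable _ _)
      (hggcont.stronglyMeasurable.stronglyMeasurableAtFilter) hggcont.continuousAt).hasDerivAt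
  have hFcont : Continuous F := by
    rw [continuous_iff_continuousAt]; exact fun z => (hF z).continuousAt
  have hFdiff : ∀ w z : ℝ, F z - F w = ∫ t in w..z, gg t := by
    intro w z
    have h := intervalIntegral.integral_add_adjacent_intervals (a := (0:ℝ)) (b := w) (c := z)
      (hggcont.intervalIntegrable (μ := MeasureTheory.volume) _ _) (hggcont.intervalIntegrable (μ := MeasureTheory.volume) _ _)
    rw [hFdef]; simp only; linarith [h]
  have hFlip : ∀ w z : ℝ, |F z - F w| ≤ Cg * |z - w| := by
    intro w z
    rw [hFdiff w z]
    have h := intervalIntegral.norm_integral_le_of_norm_le_const (C := Cg) (f := gg)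
      (a := w) (b := z) (fun t _ => by simpa [Real.norm_eq_abs] using hCg t)
    simpa [Real.norm_eq_abs] using h
  have hFΦ : ∀ z ∈ Icc (x₀ - 2*r) (x₀ + 2*r), F z - F x₀ = Φ z - Φ x₀ := by
    intro z hz
    rw [hFdiff x₀ z]
    have huIcc : uIcc x₀ z ⊆ Icc (x₀ - 2*r) (x₀ + 2*r) := uIcc_subset_Icc hx₀mem2 hz
    rw [intervalIntegral.integral_congr (g := deriv Φ) (fun t ht => hggeq t (huIcc ht))]
    apply intervalIntegral.integral_eq_sub_of_hasDerivAt
    · intro t ht; exact (hΦd t (hsub2 (huIcc ht))).hasDerivAt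
    · exact (hΦc.mono (fun t ht => hsub2 (huIcc ht))).intervalIntegrable
  set A : ℝ → ℝ := fun z => ∫ t in (0:ℝ)..z, F t with hAdef
  have hA : ∀ z, HasDerivAt A (F z) z := fun z =>
    (intervalIntegral.integral_hasStrictDerivAt_right (hFcont.intervalIntegrable _ _)
      (hFcont.stronglyMeasurable.stronglyMeasurableAtFilter) hFcont.continuousAt).hasDerivAt
  have hAdiff : ∀ w z : ℝ, A z - A w = ∫ t in w..z, F t := by
    intro w z
    have h := intervalIntegral.integral_add_adjacent_intervals (a := (0:ℝ)) (b := w) (c := z)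
      (hFcont.intervalIntegrable (μ := MeasureTheory.volume) _ _) (hFcont.intervalIntegrable (μ := MeasureTheory.volume) _ _)
    rw [hAdef]; simp only; linarith [h]
  -- delta
  set δ : ℕ → ℝ := fun m => Real.sqrt (σs m) with hδdef
  have hδpos : ∀ m, 0 < δ m := fun m => Real.sqrt_pos.mpr (hσs m)
  have hδ0 : Tendsto δ atTop (nhds 0) := by
    have h := (Real.continuous_sqrt.tendsto 0).comp hσs0
    simpa [Real.sqrt_zero, Function.comp_def] using h
  have hσδ : ∀ m, σs m / δ m = δ m := fun m => by rw [hδdef]; exact Real.div_sqrt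
  -- test functions
  set ζ : ℕ → ℝ → ℝ := fun m x => (A (x + δ m) - A (x - δ m)) / (2 * δ m) - (x - x₀)^2
    with hζdef
  set ζ' : ℕ → ℝ → ℝ := fun m x => (F (x + δ m) - F (x - δ m)) / (2 * δ m) - 2*(x - x₀)
    with hζ'def
  set ζ'' : ℕ → ℝ → ℝ := fun m x => (gg (x + δ m) - gg (x - δ m)) / (2 * δ m) - 2
    with hζ''def
  have hζd : ∀ m x, HasDerivAt (ζ m) (ζ' m x) x := by
    intro m x
    have h1 : HasDerivAt (fun x => A (x + δ m)) (F (x + δ m)) x := by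
      simpa [Function.comp_def] using HasDerivAt.comp x (hA (x + δ m)) ((hasDerivAt_id x).add_const (δ m))
    have h2 : HasDerivAt (fun x => A (x - δ m)) (F (x - δ m)) x := by
      simpa [Function.comp_def] using HasDerivAt.comp x (hA (x - δ m)) ((hasDerivAt_id x).sub_const (δ m))
    have h3 : HasDerivAt (fun x => (x - x₀)^2) (2*(x - x₀)) x := by
      have h := ((hasDerivAt_id x).sub_const x₀).pow 2; simp at h; exact h
    exact ((h1.sub h2).div_const (2 * δ m)).sub h3
  have hζ'd : ∀ m x, HasDerivAt (ζ' m) (ζ'' m x) x := by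
    intro m x
    have h1 : HasDerivAt (fun x => F (x + δ m)) (gg (x + δ m)) x := by
      simpa [Function.comp_def] using HasDerivAt.comp x (hF (x + δ m)) ((hasDerivAt_id x).add_const (δ m))
    have h2 : HasDerivAt (fun x => F (x - δ m)) (gg (x - δ m)) x := by
      simpa [Function.comp_def] using HasDerivAt.comp x (hF (x - δ m)) ((hasDerivAt_id x).sub_const (δ m))
    have h3 : HasDerivAt (fun x => 2*(x - x₀)) 2 x := by
      simpa using ((hasDerivAt_id x).sub_const x₀).const_mul 2
    exact ((h1.sub h2).div_const (2 * δ m)).sub h3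
  have hζcont : ∀ m, Continuous (ζ m) := by
    intro m
    rw [continuous_iff_continuousAt]; exact fun z => (hζd m z).continuousAt
  -- u functions
  set u₁ : ℕ → ℝ → ℝ := fun m x => -σs m * Real.log (n₁ m x) with hu₁def
  set u₂ : ℕ → ℝ → ℝ := fun m x => -σs m * Real.log (n₂ m x) with hu₂def
  have hu₁cont : ∀ m, ContinuousOn (u₁ m) (Icc (0:ℝ) 1) := by
    intro m z hz
    exact (continuousAt_const.mul
      (((hc₁ m).continuous.continuousAt).log (ne_of_gt (hpos m z hz).1))).continuousWithinAt
  have hu₂cont : ∀ m, ContinuousOn (u₂ m) (Icc (0:ℝ) 1) := by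
    intro m z hz
    exact (continuousAt_const.mul
      (((hc₂ m).continuous.continuousAt).log (ne_of_gt (hpos m z hz).2))).continuousWithinAt
  -- selection of max points
  have hsel₁ : ∀ m, ∃ y ∈ Icc (x₀ - r) (x₀ + r),
      IsMinOn (fun x => u₁ m x - ζ m x) (Icc (x₀ - r) (x₀ + r)) y := fun m =>
    isCompact_Icc.exists_isMinOn ⟨x₀, hx₀mem1⟩
      (((hu₁cont m).mono hsubI).sub (hζcont m).continuousOn)
  have hsel₂ : ∀ m, ∃ y ∈ Icc (x₀ - r) (x₀ + r),
      IsMinOn (fun x => u₂ m x - ζ m x) (Icc (x₀ - r) (x₀ + r)) y := fun m =>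
    isCompact_Icc.exists_isMinOn ⟨x₀, hx₀mem1⟩
      (((hu₂cont m).mono hsubI).sub (hζcont m).continuousOn)
  choose X₁ hX₁mem hX₁max using hsel₁
  choose X₂ hX₂mem hX₂max using hsel₂
  have hX₁max' : ∀ m, ∀ z ∈ Icc (x₀ - r) (x₀ + r),
      u₁ m (X₁ m) - ζ m (X₁ m) ≤ u₁ m z - ζ m z := fun m => isMinOn_iff.mp (hX₁max m)
  have hX₂max' : ∀ m, ∀ z ∈ Icc (x₀ - r) (x₀ + r),
      u₂ m (X₂ m) - ζ m (X₂ m) ≤ u₂ m z - ζ m z := fun m => isMinOn_iff.mp (hX₂max m)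
  -- ζ uniform error
  have hζerr : ∀ ε > 0, ∀ᶠ m in atTop, ∀ z, |ζ m z - (F z - (z - x₀)^2)| ≤ ε := by
    intro ε hε
    have hev : ∀ᶠ m in atTop, δ m < ε / (Cg + 1) := by
      have h := (Metric.tendsto_nhds.mp hδ0) (ε / (Cg + 1)) (by positivity)
      filter_upwards [h] with m hm
      rw [Real.dist_eq, sub_zero, abs_of_pos (hδpos m)] at hm
      exact hm
    filter_upwards [hev] with m hm z
    have h1 : ζ m z - (F z - (z - x₀)^2)
        = (∫ t in (z - δ m)..(z + δ m), F t) / (2 * δ m) - F z := by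
      rw [hζdef]; simp only; rw [← hAdiff (z - δ m) (z + δ m)]; ring
    rw [h1]
    have hb : ∀ t ∈ Icc (z - δ m) (z + δ m), |F t - F z| ≤ Cg * δ m := by
      intro t ht
      refine le_trans (hFlip z t) ?_
      apply mul_le_mul_of_nonneg_left _ hCg0
      rw [abs_le]; constructor <;> [linarith [ht.1]; linarith [ht.2]]
    have h2 := avg_err' hFcont (hδpos m) (by positivity : (0:ℝ) ≤ Cg * δ m) hb
    refine le_trans h2 ?_
    have he' : (Cg + 1) * (ε / (Cg + 1)) = ε := by field_simp
    have h3 : (Cg + 1) * δ m ≤ (Cg + 1) * (ε / (Cg + 1)) :=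
      mul_le_mul_of_nonneg_left hm.le (by linarith)
    rw [he'] at h3
    nlinarith [hδpos m, h3]
  -- comparison for select_conv (negated)
  have hcomp : ∀ z ∈ Icc (x₀ - r) (x₀ + r),
      (fun x => -R x) z - (fun z => -(F z - (z - x₀)^2)) z
        ≤ (fun x => -R x) x₀ - (fun z => -(F z - (z - x₀)^2)) x₀ - (z - x₀)^2 := by
    intro z hz
    have h1 := hminI z hz
    have h2 := hFΦ z (hsub1 hz)
    simp only
    nlinarith [h1, h2]
  have hnegconv : ∀ (nn : ℕ → ℝ → ℝ),
      TendstoUniformlyOn (fun m x => -σs m * Real.log (nn m x)) R atTop (Icc 0 1) →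
      TendstoUniformlyOn (fun m x => -(-σs m * Real.log (nn m x))) (fun x => -R x)
        atTop (Icc 0 1) := by
    intro nn hc
    rw [Metric.tendstoUniformlyOn_iff] at hc ⊢
    intro ε hε
    filter_upwards [hc ε hε] with m hm x hx
    show dist (-R x) (-(-σs m * Real.log (nn m x))) < ε
    rw [dist_neg_neg]
    exact hm x hx
  have hζerr' : ∀ ε > 0, ∀ᶠ m in atTop, ∀ z,
      |(fun x => -(ζ m x)) z - (fun z => -(F z - (z - x₀)^2)) z| ≤ ε := by
    intro ε hε
    filter_upwards [hζerr ε hε] with m hm z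
    show |-(ζ m z) - -(F z - (z - x₀)^2)| ≤ ε
    rw [show -(ζ m z) - -(F z - (z - x₀)^2) = -(ζ m z - (F z - (z - x₀)^2)) by ring, abs_neg]
    exact hm z
  -- convergence of the min points
  have hT1 : Tendsto X₁ atTop (nhds x₀) := by
    refine select_conv (u := fun m x => -(u₁ m x)) (ζ := fun m x => -(ζ m x))
      hr hsubI hX₁mem ?_ hcomp (hnegconv n₁ hconv₁) hζerr'
    intro m z hz
    have := hX₁max' m z hz
    linarith
  have hT2 : Tendsto X₂ atTop (nhds x₀) := by
    refine select_conv (u := fun m x => -(u₂ m x)) (ζ := fun m x => -(ζ m x))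
      hr hsubI hX₂mem ?_ hcomp (hnegconv n₂ hconv₂) hζerr'
    intro m z hz
    have := hX₂max' m z hz
    linarith
    -- derivative limit along any sequence converging to x₀
  have hT2gen : ∀ (x : ℕ → ℝ), Tendsto x atTop (nhds x₀) →
      Tendsto (fun m => ζ' m (x m)) atTop (nhds (deriv Φ x₀)) := by
    intro x hx
    have haux : Tendsto (fun m => (F (x m + δ m) - F (x m - δ m)) / (2 * δ m)) atTop
        (nhds (deriv Φ x₀)) := by
      rw [Metric.tendsto_nhds]
      intro ε hε
      rcases Metric.continuousAt_iff.mp hggcont.continuousAt (ε/2) (by linarith) with ⟨ρ, hρ, hρb⟩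
      have hev1 : ∀ᶠ m in atTop, |x m - x₀| < ρ/2 := by
        have h := (Metric.tendsto_nhds.mp hx) (ρ/2) (by linarith)
        filter_upwards [h] with m hm
        rwa [Real.dist_eq] at hm
      have hev2 : ∀ᶠ m in atTop, δ m < ρ/2 := by
        have h := (Metric.tendsto_nhds.mp hδ0) (ρ/2) (by linarith)
        filter_upwards [h] with m hm
        rw [Real.dist_eq, sub_zero, abs_of_pos (hδpos m)] at hm
        exact hm
      filter_upwards [hev1, hev2] with m h1 h2
      rw [Real.dist_eq]
      have hFd : F (x m + δ m) - F (x m - δ m) = ∫ t in (x m - δ m)..(x m + δ m), gg t :=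
        hFdiff _ _
      rw [hFd]
      have hb : ∀ t ∈ Icc (x m - δ m) (x m + δ m), |gg t - deriv Φ x₀| ≤ ε/2 := by
        intro t ht
        have htx : dist t x₀ < ρ := by
          rw [Real.dist_eq]
          have h3 := abs_lt.mp h1
          rw [abs_lt]
          constructor <;> [linarith [ht.1]; linarith [ht.2]]
        have h4 := hρb htx
        rw [Real.dist_eq, hggx₀] at h4
        exact le_of_lt h4
      have h5 := avg_err' hggcont (hδpos m) (by linarith : (0:ℝ) ≤ ε/2) hb
      linarith [h5]
    have haux2 : Tendsto (fun m => 2*(x m - x₀)) atTop (nhds 0) := by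
      have h := (hx.sub_const x₀).const_mul (2:ℝ)
      simpa using h
    have h := haux.sub haux2
    simpa using h
  -- σ ζ'' → 0 along any sequence
  have hT3gen : ∀ (x : ℕ → ℝ),
      Tendsto (fun m => σs m * ζ'' m (x m)) atTop (nhds 0) := by
    intro x
    have h1 : Tendsto (fun m => σs m * ((gg (x m + δ m) - gg (x m - δ m)) / (2 * δ m)))
        atTop (nhds 0) := by
      apply squeeze_zero_norm (a := fun m => δ m * Cg)
      · intro m
        have hnum : |gg (x m + δ m) - gg (x m - δ m)| ≤ 2 * Cg := by
          have h1 := abs_lt.mp (lt_of_le_of_lt (hCg (x m + δ m)) (lt_add_one Cg))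
          have ha := abs_le.mp (hCg (x m + δ m))
          have hb := abs_le.mp (hCg (x m - δ m))
          rw [abs_le]
          constructor <;> linarith
        have hq : |(gg (x m + δ m) - gg (x m - δ m)) / (2 * δ m)| ≤ Cg / δ m := by
          rw [abs_div, abs_of_pos (by linarith [hδpos m] : (0:ℝ) < 2 * δ m)]
          rw [div_le_div_iff₀ (by linarith [hδpos m]) (hδpos m)]
          nlinarith [hnum, hδpos m]
        calc ‖σs m * ((gg (x m + δ m) - gg (x m - δ m)) / (2 * δ m))‖
            = σs m * |(gg (x m + δ m) - gg (x m - δ m)) / (2 * δ m)| := by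
              rw [Real.norm_eq_abs, abs_mul, abs_of_pos (hσs m)]
          _ ≤ σs m * (Cg / δ m) := mul_le_mul_of_nonneg_left hq (le_of_lt (hσs m))
          _ = δ m * Cg := by
              rw [show σs m * (Cg / δ m) = (σs m / δ m) * Cg by ring, hσδ m]
      · simpa using hδ0.mul_const Cg
    have h2 : Tendsto (fun m => σs m * 2) atTop (nhds 0) := by
      simpa using hσs0.mul_const 2
    have h := h1.sub h2
    rw [hζ''def]
    simp only [mul_sub] at h ⊢
    simpa using h
  -- σ h(x m) → 0
  have hT4gen : ∀ (x : ℕ → ℝ) (h : ℝ → ℝ), Continuous h → Tendsto x atTop (nhds x₀) →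
      Tendsto (fun m => σs m * h (x m)) atTop (nhds 0) := by
    intro x h hh hx
    have := hσs0.mul ((hh.tendsto x₀).comp hx)
    simpa using this
  -- second derivatives of ψ continuous
  have hψ₁1 : ContDiff ℝ 1 (deriv ψ₁) := by
    have h := (contDiff_succ_iff_deriv (n := 1)).mp (by norm_num at hψ₁ ⊢; exact hψ₁)
    exact h.2.2
  have hψ₂1 : ContDiff ℝ 1 (deriv ψ₂) := by
    have h := (contDiff_succ_iff_deriv (n := 1)).mp (by norm_num at hψ₂ ⊢; exact hψ₂)
    exact h.2.2
  have hψ₁'' : Continuous (deriv (deriv ψ₁)) := hψ₁1.continuous_deriv le_rfl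
  have hψ₂'' : Continuous (deriv (deriv ψ₂)) := hψ₂1.continuous_deriv le_rfl
  have hψ₁' : Continuous (deriv ψ₁) := hψ₁.continuous_deriv (by norm_num)
  have hψ₂' : Continuous (deriv ψ₂) := hψ₂.continuous_deriv (by norm_num)
  -- eventual interior and local max
  have hev₁ : ∀ᶠ m in atTop, X₁ m ∈ Ioo (0:ℝ) 1 ∧
      IsLocalMin (fun x => u₁ m x - ζ m x) (X₁ m) := by
    have h := (Metric.tendsto_nhds.mp hT1) r hr
    filter_upwards [h] with m hm
    rw [Real.dist_eq] at hm
    obtain ⟨ha, hb⟩ := abs_lt.mp hm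
    refine ⟨hsubo ⟨by linarith, by linarith⟩, ?_⟩
    exact (hX₁max m).isLocalMin (Icc_mem_nhds (by linarith) (by linarith))
  have hev₂ : ∀ᶠ m in atTop, X₂ m ∈ Ioo (0:ℝ) 1 ∧
      IsLocalMin (fun x => u₂ m x - ζ m x) (X₂ m) := by
    have h := (Metric.tendsto_nhds.mp hT2) r hr
    filter_upwards [h] with m hm
    rw [Real.dist_eq] at hm
    obtain ⟨ha, hb⟩ := abs_lt.mp hm
    refine ⟨hsubo ⟨by linarith, by linarith⟩, ?_⟩
    exact (hX₂max m).isLocalMin (Icc_mem_nhds (by linarith) (by linarith))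
  -- the key eventual inequalities
  set B₁ : ℕ → ℝ := fun m => σs m * ζ'' m (X₁ m) - σs m * deriv (deriv ψ₁) (X₁ m)
    - ((ζ' m (X₁ m))^2 - deriv ψ₁ (X₁ m) * ζ' m (X₁ m) - ν₁) with hB₁def
  set B₂ : ℕ → ℝ := fun m => σs m * ζ'' m (X₂ m) - σs m * deriv (deriv ψ₂) (X₂ m)
    - ((ζ' m (X₂ m))^2 - deriv ψ₂ (X₂ m) * ζ' m (X₂ m) - ν₂) with hB₂def
  have hE₁ : ∀ᶠ m in atTop, B₁ m ≤ ν₂ * n₂ m (X₁ m) / n₁ m (X₁ m) := by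
    filter_upwards [hev₁] with m hm
    have h := (fp_eqn_at_point ψ₁ hψ₁ ν₁ ν₂ (σs m) (hσs m) (n₁ m) (n₂ m) (hc₁ m)
      (fun z hz => (hpos m z hz).1) (heq₁ m) (ζ m) (ζ' m) (ζ'' m) (hζd m) (hζ'd m)
      (X₁ m) hm.1).2 hm.2
    rw [hB₁def]
    linarith [h]
  have hE₂ : ∀ᶠ m in atTop, B₂ m ≤ ν₁ * n₁ m (X₂ m) / n₂ m (X₂ m) := by
    filter_upwards [hev₂] with m hm
    have h := (fp_eqn_at_point ψ₂ hψ₂ ν₂ ν₁ (σs m) (hσs m) (n₂ m) (n₁ m) (hc₂ m)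
      (fun z hz => (hpos m z hz).2) (heq₂ m) (ζ m) (ζ' m) (ζ'' m) (hζd m) (hζ'd m)
      (X₂ m) hm.1).2 hm.2
    rw [hB₂def]
    linarith [h]
  -- limits of B sequences
  have hβ₁lim : Tendsto (fun m => (ζ' m (X₁ m))^2 - deriv ψ₁ (X₁ m) * ζ' m (X₁ m) - ν₁)
      atTop (nhds ((deriv Φ x₀)^2 - deriv ψ₁ x₀ * deriv Φ x₀ - ν₁)) := by
    have h1 := hT2gen X₁ hT1
    have h2 : Tendsto (fun m => deriv ψ₁ (X₁ m)) atTop (nhds (deriv ψ₁ x₀)) :=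
      (hψ₁'.tendsto x₀).comp hT1
    exact ((h1.pow 2).sub (h2.mul h1)).sub tendsto_const_nhds
  have hβ₂lim : Tendsto (fun m => (ζ' m (X₂ m))^2 - deriv ψ₂ (X₂ m) * ζ' m (X₂ m) - ν₂)
      atTop (nhds ((deriv Φ x₀)^2 - deriv ψ₂ x₀ * deriv Φ x₀ - ν₂)) := by
    have h1 := hT2gen X₂ hT2
    have h2 : Tendsto (fun m => deriv ψ₂ (X₂ m)) atTop (nhds (deriv ψ₂ x₀)) :=
      (hψ₂'.tendsto x₀).comp hT2
    exact ((h1.pow 2).sub (h2.mul h1)).sub tendsto_const_nhds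
  have herr₁ : Tendsto (fun m => σs m * ζ'' m (X₁ m) - σs m * deriv (deriv ψ₁) (X₁ m))
      atTop (nhds 0) := by
    have h := (hT3gen X₁).sub (hT4gen X₁ _ hψ₁'' hT1)
    simpa using h
  have herr₂ : Tendsto (fun m => σs m * ζ'' m (X₂ m) - σs m * deriv (deriv ψ₂) (X₂ m))
      atTop (nhds 0) := by
    have h := (hT3gen X₂).sub (hT4gen X₂ _ hψ₂'' hT2)
    simpa using h
  have hB₁lim : Tendsto B₁ atTop
      (nhds (0 - ((deriv Φ x₀)^2 - deriv ψ₁ x₀ * deriv Φ x₀ - ν₁))) := herr₁.sub hβ₁lim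
  have hB₂lim : Tendsto B₂ atTop
      (nhds (0 - ((deriv Φ x₀)^2 - deriv ψ₂ x₀ * deriv Φ x₀ - ν₂))) := herr₂.sub hβ₂lim
  -- positivity of quotients
  have hq₁ : ∀ m, 0 < ν₂ * n₂ m (X₁ m) / n₁ m (X₁ m) := by
    intro m
    have h := hpos m (X₁ m) (hsubI (hX₁mem m))
    exact div_pos (mul_pos hν₂0 h.2) h.1
  have hq₂ : ∀ m, 0 < ν₁ * n₁ m (X₂ m) / n₂ m (X₂ m) := by
    intro m
    have h := hpos m (X₂ m) (hsubI (hX₂mem m))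
    exact div_pos (mul_pos hν₁0 h.1) h.2
  -- cross inequality (flipped)
  have hcross : ∀ m, (ν₂ * n₂ m (X₁ m) / n₁ m (X₁ m))
      * (ν₁ * n₁ m (X₂ m) / n₂ m (X₂ m)) ≤ ν₁ * ν₂ := by
    intro m
    have c1 := hX₁max' m (X₂ m) (hX₂mem m)
    have c2 := hX₂max' m (X₁ m) (hX₁mem m)
    have p11 : 0 < n₁ m (X₁ m) := (hpos m (X₁ m) (hsubI (hX₁mem m))).1
    have p21 : 0 < n₂ m (X₁ m) := (hpos m (X₁ m) (hsubI (hX₁mem m))).2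
    have p12 : 0 < n₁ m (X₂ m) := (hpos m (X₂ m) (hsubI (hX₂mem m))).1
    have p22 : 0 < n₂ m (X₂ m) := (hpos m (X₂ m) (hsubI (hX₂mem m))).2
    have hσm := hσs m
    have hlog : Real.log (n₁ m (X₂ m)) + Real.log (n₂ m (X₁ m))
        ≤ Real.log (n₁ m (X₁ m)) + Real.log (n₂ m (X₂ m)) := by
      rw [hu₁def] at c1
      rw [hu₂def] at c2
      simp only at c1 c2
      apply le_of_mul_le_mul_left _ hσm
      nlinarith [c1, c2]
    have hmul : n₁ m (X₂ m) * n₂ m (X₁ m) ≤ n₁ m (X₁ m) * n₂ m (X₂ m) := by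
      rw [← Real.log_mul (ne_of_gt p12) (ne_of_gt p21),
        ← Real.log_mul (ne_of_gt p11) (ne_of_gt p22)] at hlog
      exact (Real.log_le_log_iff (by positivity) (by positivity)).mp hlog
    rw [div_mul_div_comm, div_le_iff₀ (by positivity)]
    nlinarith [mul_le_mul_of_nonneg_left hmul (le_of_lt (mul_pos hν₂0 hν₁0))]
  -- product conclusion
  have hevB : (fun m => max (B₁ m) 0 * max (B₂ m) 0) ≤ᶠ[atTop] (fun _ => ν₁ * ν₂) := by
    filter_upwards [hE₁, hE₂] with m h₁ h₂
    calc max (B₁ m) 0 * max (B₂ m) 0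
        ≤ (ν₂ * n₂ m (X₁ m) / n₁ m (X₁ m)) * (ν₁ * n₁ m (X₂ m) / n₂ m (X₂ m)) := by
          apply mul_le_mul (max_le h₁ (le_of_lt (hq₁ m))) (max_le h₂ (le_of_lt (hq₂ m)))
            (le_max_right _ _) (le_of_lt (hq₁ m))
      _ ≤ ν₁ * ν₂ := hcross m
  have hmaxlim : Tendsto (fun m => max (B₁ m) 0 * max (B₂ m) 0) atTop
      (nhds (max (0 - ((deriv Φ x₀)^2 - deriv ψ₁ x₀ * deriv Φ x₀ - ν₁)) 0
        * max (0 - ((deriv Φ x₀)^2 - deriv ψ₂ x₀ * deriv Φ x₀ - ν₂)) 0)) :=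
    (hB₁lim.max tendsto_const_nhds).mul (hB₂lim.max tendsto_const_nhds)
  have h := le_of_tendsto_of_tendsto hmaxlim tendsto_const_nhds hevB
  simpa [zero_sub] using h

theorem fp2_effective_hamiltonian_aux (ψ₁ ψ₂ : ℝ → ℝ) (ν₁ ν₂ k : ℝ)
    (hψ₁ : ContDiff ℝ 2 ψ₁) (hψ₂ : ContDiff ℝ 2 ψ₂)
    (hk : 0 < k) (hν₁ : k ≤ ν₁) (hν₂ : k ≤ ν₂)
    (σs : ℕ → ℝ) (hσs : ∀ m, 0 < σs m) (hσs0 : Tendsto σs atTop (nhds 0))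
    (n₁ n₂ : ℕ → ℝ → ℝ)
    (hc₁ : ∀ m, ContDiff ℝ 2 (n₁ m)) (hc₂ : ∀ m, ContDiff ℝ 2 (n₂ m))
    (hpos : ∀ m, ∀ x ∈ Set.Icc (0:ℝ) 1, 0 < n₁ m x ∧ 0 < n₂ m x)
    (heq₁ : ∀ m, ∀ x ∈ Set.Ioo (0:ℝ) 1,
      -σs m * deriv (deriv (n₁ m)) x - deriv (fun y => deriv ψ₁ y * n₁ m y) x
        + (ν₁ / σs m) * n₁ m x = (ν₂ / σs m) * n₂ m x)
    (heq₂ : ∀ m, ∀ x ∈ Set.Ioo (0:ℝ) 1,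
      -σs m * deriv (deriv (n₂ m)) x - deriv (fun y => deriv ψ₂ y * n₂ m y) x
        + (ν₂ / σs m) * n₂ m x = (ν₁ / σs m) * n₁ m x)
    (R : ℝ → ℝ)
    (hconv₁ : TendstoUniformlyOn (fun m x => -(σs m) * Real.log (n₁ m x)) R atTop
      (Set.Icc 0 1))
    (hconv₂ : TendstoUniformlyOn (fun m x => -(σs m) * Real.log (n₂ m x)) R atTop
      (Set.Icc 0 1))
    (Φ : ℝ → ℝ) (hΦd : ∀ x ∈ Set.Ioo (0:ℝ) 1, DifferentiableAt ℝ Φ x)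
    (hΦc : ContinuousOn (deriv Φ) (Set.Ioo 0 1))
    (x₀ : ℝ) (hx₀ : x₀ ∈ Set.Ioo (0:ℝ) 1) :
    (IsLocalMax (fun x => R x - Φ x) x₀ →
      (1 / 2) * ((deriv Φ x₀ ^ 2 - deriv ψ₁ x₀ * deriv Φ x₀ - ν₁)
        + (deriv Φ x₀ ^ 2 - deriv ψ₂ x₀ * deriv Φ x₀ - ν₂)
        + Real.sqrt (((deriv Φ x₀ ^ 2 - deriv ψ₁ x₀ * deriv Φ x₀ - ν₁)
              + (deriv Φ x₀ ^ 2 - deriv ψ₂ x₀ * deriv Φ x₀ - ν₂)) ^ 2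
            - 4 * ((deriv Φ x₀ ^ 2 - deriv ψ₁ x₀ * deriv Φ x₀ - ν₁)
              * (deriv Φ x₀ ^ 2 - deriv ψ₂ x₀ * deriv Φ x₀ - ν₂) - ν₁ * ν₂))) ≤ 0) ∧
    (IsLocalMin (fun x => R x - Φ x) x₀ →
      0 ≤ (1 / 2) * ((deriv Φ x₀ ^ 2 - deriv ψ₁ x₀ * deriv Φ x₀ - ν₁)
        + (deriv Φ x₀ ^ 2 - deriv ψ₂ x₀ * deriv Φ x₀ - ν₂)
        + Real.sqrt (((deriv Φ x₀ ^ 2 - deriv ψ₁ x₀ * deriv Φ x₀ - ν₁)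
              + (deriv Φ x₀ ^ 2 - deriv ψ₂ x₀ * deriv Φ x₀ - ν₂)) ^ 2
            - 4 * ((deriv Φ x₀ ^ 2 - deriv ψ₁ x₀ * deriv Φ x₀ - ν₁)
              * (deriv Φ x₀ ^ 2 - deriv ψ₂ x₀ * deriv Φ x₀ - ν₂) - ν₁ * ν₂)))) := by
  have hν₁0 : 0 < ν₁ := lt_of_lt_of_le hk hν₁
  have hν₂0 : 0 < ν₂ := lt_of_lt_of_le hk hν₂
  set b₁ : ℝ := deriv Φ x₀ ^ 2 - deriv ψ₁ x₀ * deriv Φ x₀ - ν₁ with hb₁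
  set b₂ : ℝ := deriv Φ x₀ ^ 2 - deriv ψ₂ x₀ * deriv Φ x₀ - ν₂ with hb₂
  constructor
  · intro hmax
    obtain ⟨h1, h2, h3⟩ := fp2_max_branch ψ₁ ψ₂ hψ₁ hψ₂ ν₁ ν₂ hν₁0 hν₂0 σs hσs hσs0
      n₁ n₂ hc₁ hc₂ hpos heq₁ heq₂ R hconv₁ hconv₂ Φ hΦd hΦc x₀ hx₀ hmax
    rw [← hb₁] at h1 h3
    rw [← hb₂] at h2 h3
    have harg : (b₁ + b₂) ^ 2 - 4 * (b₁ * b₂ - ν₁ * ν₂) ≤ (b₁ + b₂) ^ 2 := by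
      nlinarith [h3]
    have hs := Real.sqrt_le_sqrt harg
    rw [Real.sqrt_sq_eq_abs] at hs
    have habs : |b₁ + b₂| = -(b₁ + b₂) := abs_of_nonpos (by linarith)
    rw [habs] at hs
    linarith [hs]
  · intro hmin
    have h := fp2_min_branch ψ₁ ψ₂ hψ₁ hψ₂ ν₁ ν₂ hν₁0 hν₂0 σs hσs hσs0
      n₁ n₂ hc₁ hc₂ hpos heq₁ heq₂ R hconv₁ hconv₂ Φ hΦd hΦc x₀ hx₀ hmin
    rw [← hb₁, ← hb₂] at h
    rcases le_or_gt 0 (b₁ + b₂) with hS | hS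
    · have := Real.sqrt_nonneg ((b₁ + b₂) ^ 2 - 4 * (b₁ * b₂ - ν₁ * ν₂))
      linarith
    · have hprod : b₁ * b₂ ≤ ν₁ * ν₂ := by
        rcases le_or_gt 0 b₁ with h1 | h1
        · have h2 : b₂ < 0 := by linarith
          have h4 : b₁ * b₂ ≤ 0 := mul_nonpos_of_nonneg_of_nonpos h1 (le_of_lt h2)
          nlinarith [mul_pos hν₁0 hν₂0]
        · rcases le_or_gt 0 b₂ with h2 | h2
          · have h4 : b₁ * b₂ ≤ 0 := mul_nonpos_of_nonpos_of_nonneg (le_of_lt h1) h2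
            nlinarith [mul_pos hν₁0 hν₂0]
          · have e1 : max (-b₁) 0 = -b₁ := max_eq_left (by linarith)
            have e2 : max (-b₂) 0 = -b₂ := max_eq_left (by linarith)
            rw [e1, e2] at h
            nlinarith [h]
      have harg : (b₁ + b₂) ^ 2 ≤ (b₁ + b₂) ^ 2 - 4 * (b₁ * b₂ - ν₁ * ν₂) := by
        nlinarith
      have hs := Real.sqrt_le_sqrt (le_of_eq (rfl : (b₁ + b₂) ^ 2 = (b₁ + b₂) ^ 2))
      have hs2 : Real.sqrt ((b₁ + b₂) ^ 2)
          ≤ Real.sqrt ((b₁ + b₂) ^ 2 - 4 * (b₁ * b₂ - ν₁ * ν₂)) := Real.sqrt_le_sqrt harg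
      rw [Real.sqrt_sq_eq_abs] at hs2
      have habs : |b₁ + b₂| = -(b₁ + b₂) := abs_of_nonpos (by linarith)
      rw [habs] at hs2
      linarith [hs2]

/-- Lemma 3.2 (effective Hamiltonian): the uniform limit `R` of the phase functions
is a viscosity solution of `H(R', x) = 0` in `(0,1)`, where
`H(p,x) = (1/2)[β₁+β₂+√((β₁+β₂)² − 4(β₁β₂ − ν₁ν₂))]`, `βᵢ = p² − ψᵢ' p − νᵢ`. -/
theorem fp2_effective_hamiltonian (ψ₁ ψ₂ : ℝ → ℝ) (ν₁ ν₂ k : ℝ)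
    (hψ₁ : ContDiff ℝ 2 ψ₁) (hψ₂ : ContDiff ℝ 2 ψ₂)
    (hψL₁ : ∃ L : NNReal, LipschitzOnWith L (deriv (deriv ψ₁)) (Set.Icc 0 1))
    (hψL₂ : ∃ L : NNReal, LipschitzOnWith L (deriv (deriv ψ₂)) (Set.Icc 0 1))
    (hk : 0 < k) (hν₁ : k ≤ ν₁) (hν₂ : k ≤ ν₂)
    -- (H2)
    (M : ℕ) (a b : Fin M → ℝ)
    (hJ : ∀ l, a l < b l ∧ 0 ≤ a l ∧ b l ≤ 1)
    (hH2 : ∀ x ∈ ⋃ l, Set.Ioo (a l) (b l), 0 < min (deriv ψ₁ x) (deriv ψ₂ x))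
    -- (H3)
    (hH3 : ∀ x ∈ Set.Icc (0:ℝ) 1, 0 < max (deriv ψ₁ x) (deriv ψ₂ x))
    (σs : ℕ → ℝ) (hσs : ∀ m, 0 < σs m) (hσs0 : Tendsto σs atTop (nhds 0))
    (n₁ n₂ : ℕ → ℝ → ℝ)
    (hn : ∀ m, IsFPSolution2 ψ₁ ψ₂ ν₁ ν₂ (σs m) (n₁ m) (n₂ m))
    (R : ℝ → ℝ) (hR : ContinuousOn R (Set.Icc 0 1))
    (hconv₁ : TendstoUniformlyOn (fun m x => -(σs m) * Real.log (n₁ m x)) R atTop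
      (Set.Icc 0 1))
    (hconv₂ : TendstoUniformlyOn (fun m x => -(σs m) * Real.log (n₂ m x)) R atTop
      (Set.Icc 0 1)) :
    ∀ H : ℝ → ℝ → ℝ,
      H = (fun p x =>
        (1 / 2) * ((p ^ 2 - deriv ψ₁ x * p - ν₁) + (p ^ 2 - deriv ψ₂ x * p - ν₂)
          + Real.sqrt (((p ^ 2 - deriv ψ₁ x * p - ν₁)
                + (p ^ 2 - deriv ψ₂ x * p - ν₂)) ^ 2
              - 4 * ((p ^ 2 - deriv ψ₁ x * p - ν₁) * (p ^ 2 - deriv ψ₂ x * p - ν₂)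
                - ν₁ * ν₂)))) →
      ∀ Φ : ℝ → ℝ, (∀ x ∈ Set.Ioo (0:ℝ) 1, DifferentiableAt ℝ Φ x) →
        ContinuousOn (deriv Φ) (Set.Ioo 0 1) →
        ∀ x₀ ∈ Set.Ioo (0:ℝ) 1,
          (IsLocalMax (fun x => R x - Φ x) x₀ → H (deriv Φ x₀) x₀ ≤ 0) ∧
          (IsLocalMin (fun x => R x - Φ x) x₀ → 0 ≤ H (deriv Φ x₀) x₀) := by
  intro H hH Φ hΦd hΦc x₀ hx₀
  subst hH
  exact fp2_effective_hamiltonian_aux ψ₁ ψ₂ ν₁ ν₂ k hψ₁ hψ₂ hk hν₁ hν₂ σs hσs hσs0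
    n₁ n₂ (fun m => (hn m).1) (fun m => (hn m).2.1) (fun m => (hn m).2.2.1)
    (fun m => (hn m).2.2.2.1) (fun m => (hn m).2.2.2.2.1) R hconv₁ hconv₂
    Φ hΦd hΦc x₀ hx₀
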